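/- arXiv:1302.2675 — 4 statements merged into one kernel-verified Lean document; each statement's English description precedes it below -/
import Mathlib

section
/- If a run DAG G of a nondeterministic Büchi automaton on an infinite word admits an odd ranking, then G contains no accepting path (i.e., G is rejecting). -/
/-- Strict lexicographic order on finite 0-1 profiles. -/
def ProfLt (a b : List Bool) : Prop := List.Lex (· < ·) a b

/-- Non-strict lexicographic order on finite 0-1 profiles. -/
def ProfLe (a b : List Bool) : Prop := a = b ∨ ProfLt a b

/-- A nondeterministic Büchi automaton on infinite words. -/
structure NBW (Q : Type) (σ : Type) where
  init : Set Q
  trans : Q → σ → Set Q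
  acc : Q → Bool

namespace NBW

variable {Q σ : Type} (A : NBW Q σ) (w : ℕ → σ)

/-- `(q,i)` is a vertex of the run DAG of `A` on `w`. -/
def InDag (v : Q × ℕ) : Prop :=
  ∃ p : ℕ → Q, p 0 ∈ A.init ∧ (∀ j, j < v.2 → p (j + 1) ∈ A.trans (p j) (w j)) ∧ p v.2 = v.1

/-- Edge of the run DAG. -/
def Edge (u v : Q × ℕ) : Prop :=
  A.InDag w u ∧ v.2 = u.2 + 1 ∧ v.1 ∈ A.trans u.1 (w u.2)

/-- An infinite initial path through the (sub-)DAG with edge relation `E`. -/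
def IsPath (E : Q × ℕ → Q × ℕ → Prop) (π : ℕ → Q × ℕ) : Prop :=
  (π 0).1 ∈ A.init ∧ (π 0).2 = 0 ∧ ∀ i, E (π i) (π (i + 1))

/-- An accepting path: initial and visiting F-nodes infinitely often. -/
def AcceptingPath (E : Q × ℕ → Q × ℕ → Prop) (π : ℕ → Q × ℕ) : Prop :=
  A.IsPath E π ∧ ∀ N, ∃ i, N ≤ i ∧ A.acc (π i).1 = true

/-- Profile (sequence of acceptance labels) of the first `i+1` states of `p`. -/
def profileOf (p : ℕ → Q) (i : ℕ) : List Bool :=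
  (List.range (i + 1)).map fun j => A.acc (p j)

/-- `p` encodes a finite initial run ending at node `v`. -/
def FinRunTo (p : ℕ → Q) (v : Q × ℕ) : Prop :=
  p 0 ∈ A.init ∧ (∀ j, j < v.2 → p (j + 1) ∈ A.trans (p j) (w j)) ∧ p v.2 = v.1

/-- `h` assigns to each node the lexicographically maximal profile
over all finite initial runs to it. -/
def IsProfileFun (h : Q × ℕ → List Bool) : Prop :=
  ∀ v, A.InDag w v →
    (∃ p, A.FinRunTo w p v ∧ A.profileOf p v.2 = h v) ∧
    ∀ p, A.FinRunTo w p v → ProfLe (A.profileOf p v.2) (h v)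

/-- Edges of the pruned DAG `G'`: only edges from predecessors of
lexicographically maximal profile are kept. -/
def Edge' (h : Q × ℕ → List Bool) (u v : Q × ℕ) : Prop :=
  A.Edge w u v ∧ ∀ u', A.Edge w u' v → ¬ ProfLt (h u) (h u')

/-- `v` is finite in `G'`: it has finitely many descendants in `G'`. -/
def FiniteIn' (h : Q × ℕ → List Bool) (v : Q × ℕ) : Prop :=
  Set.Finite {u | Relation.ReflTransGen (A.Edge' w h) v u}

/-- Vertices of `G''`: vertices of the run DAG that are not finite in `G'`. -/
def InDag'' (h : Q × ℕ → List Bool) (v : Q × ℕ) : Prop :=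
  A.InDag w v ∧ ¬ A.FiniteIn' w h v

/-- Edges of `G''`. -/
def Edge'' (h : Q × ℕ → List Bool) (u v : Q × ℕ) : Prop :=
  A.Edge' w h u v ∧ A.InDag'' w h u ∧ A.InDag'' w h v

/-- `lam` is the retrospective labeling `λ^k`: ⊤ at levels ≤ k, ⊥ on F-nodes
after level k, inherited along `G'`-edges otherwise. -/
def IsRetroLabeling (h : Q × ℕ → List Bool) (k : ℕ) (lam : Q × ℕ → Bool) : Prop :=
  (∀ u, A.InDag w u → u.2 ≤ k → lam u = true) ∧
  (∀ u, A.InDag w u → k < u.2 → A.acc u.1 = true → lam u = false) ∧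
  (∀ u v, k < v.2 → A.acc v.1 = false → A.Edge' w h u v → lam v = lam u)

/-- A labeling is legal when every ⊥-labeled node is finite in `G'`. -/
def Legal (h : Q × ℕ → List Bool) (lam : Q × ℕ → Bool) : Prop :=
  ∀ u, A.InDag w u → lam u = false → A.FiniteIn' w h u

/-- `α(u)`: the number of ⊤-labeled profile-equivalence classes on `u`'s level
whose profile is strictly greater than `h u`. -/
noncomputable def alphaCount (h : Q × ℕ → List Bool) (lam : Q × ℕ → Bool) (u : Q × ℕ) : ℕ :=
  Set.ncard {p : List Bool | ∃ v, A.InDag w v ∧ v.2 = u.2 ∧ lam v = true ∧ h v = p ∧ ProfLt (h u) p}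

/-- The `k`-retrospective ranking (with top rank `m`). -/
noncomputable def retroRank (h : Q × ℕ → List Bool) (lam : Q × ℕ → Bool) (k m : ℕ)
    (u : Q × ℕ) : ℕ :=
  if u.2 ≤ k then m
  else if lam u then 2 * A.alphaCount w h lam u + 1 else 2 * A.alphaCount w h lam u

/-- `m = 2 |Q \ F|`. -/
def mBound [Fintype Q] : ℕ :=
  2 * Finset.card (Finset.univ.filter fun q => A.acc q = false)

end NBW

/-- If a run DAG admits an odd ranking, then it has no accepting path. -/
theorem stmt0 {Q σ : Type} (A : NBW Q σ) (w : ℕ → σ) (r : Q × ℕ → ℕ)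
    (hF : ∀ v, A.InDag w v → A.acc v.1 = true → Even (r v))
    (hmono : ∀ u v, A.Edge w u v → r v ≤ r u)
    (hodd : ∀ π : ℕ → Q × ℕ, A.IsPath (A.Edge w) π →
      ∃ N, Odd (r (π N)) ∧ ∀ i, N ≤ i → r (π i) = r (π N)) :
    ¬ ∃ π : ℕ → Q × ℕ, A.AcceptingPath (A.Edge w) π := by
  rintro ⟨π, ⟨hpath, hinf⟩⟩
  obtain ⟨N, hoddN, hstab⟩ := hodd π hpath
  obtain ⟨i, hNi, hacc⟩ := hinf N
  have hin : A.InDag w (π i) := (hpath.2.2 i).1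
  have heven := hF (π i) hin hacc
  rw [hstab i hNi] at heven
  exact (Nat.not_even_iff_odd.mpr hoddN) heven
end

section
/- In G', if two nodes join (share a common child), then they have equal profiles: for edges (u,v) and (u',v) in G', h_u = h_{u'}. -/
/-- nodes that join in `G'` have equal profiles. -/
theorem stmt3 {Q σ : Type} (A : NBW Q σ) (w : ℕ → σ) (h : Q × ℕ → List Bool)
    (hprof : A.IsProfileFun w h) (u u' v : Q × ℕ)
    (huv : A.Edge' w h u v) (hu'v : A.Edge' w h u' v) :
    h u = h u' := by
  have h1 : ¬ ProfLt (h u) (h u') := huv.2 u' hu'v.1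
  have h2 : ¬ ProfLt (h u') (h u) := hu'v.2 u huv.1
  rcases lt_trichotomy (h u) (h u') with h3|h3|h3
  · exact absurd h3 h1
  · exact h3
  · exact absurd h3 h2
end

section
/- The profile preorder is preserved by G'-edges: for nodes u, v on level i and edges (u,u'), (v,v') in G', (1) if h_u < h_v then h_{u'} < h_{v'}; (2) if h_u = h_v and u', v' agree on being F-nodes then h_{u'} = h_{v'}; (3) if h_u = h_v, v' is an F-node and u' is not, then h_{u'} < h_{v'}. -/
lemma lex_append (s t : List Bool) : ∀ a b : List Bool, a.length = b.length →
    ProfLt a b → ProfLt (a ++ s) (b ++ t) := by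
  intro a
  induction a with
  | nil =>
    intro b hl hlt
    cases b with
    | nil => cases hlt
    | cons y b => simp at hl
  | cons x a ih =>
    intro b hl hlt
    cases b with
    | nil => cases hlt
    | cons y b =>
      cases hlt with
      | rel h => exact List.Lex.rel h
      | cons h => exact List.Lex.cons (ih b (by simpa using hl) h)

lemma lex_snoc : ∀ s : List Bool, ProfLt (s ++ [false]) (s ++ [true])
  | [] => List.Lex.rel (by decide)
  | x :: s => List.Lex.cons (lex_snoc s)

lemma profLt_trans {a b c : List Bool} (h1 : ProfLt a b) (h2 : ProfLt b c) : ProfLt a c :=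
  (lt_trans (h1 : a < b) (h2 : b < c) : a < c)

lemma profLt_asymm {a b : List Bool} (h1 : ProfLt a b) (h2 : ProfLt b a) : False :=
  absurd h1 (lt_asymm (h2 : b < a) : ¬ a < b)

lemma profLe_antisymm {a b : List Bool} (h1 : ProfLe a b) (h2 : ProfLe b a) : a = b := by
  rcases h1 with h1 | h1
  · exact h1
  · rcases h2 with h2 | h2
    · exact h2.symm
    · exact absurd h1 (lt_asymm (h2 : b < a) : ¬ a < b)

lemma not_profLt_iff {a b : List Bool} : ¬ ProfLt a b ↔ ProfLe b a := by
  constructor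
  · intro hn
    rcases lt_trichotomy a b with h|h|h
    · exact absurd h hn
    · exact Or.inl h.symm
    · exact Or.inr h
  · rintro (rfl | h) hlt
    · exact absurd hlt (lt_irrefl b)
    · exact profLt_asymm h hlt

section Aux
variable {Q σ : Type} (A : NBW Q σ) (w : ℕ → σ)

lemma profileOf_length (p : ℕ → Q) (i : ℕ) : (A.profileOf p i).length = i + 1 := by
  simp [NBW.profileOf]

lemma profileOf_congr (p q : ℕ → Q) (i : ℕ) (hpq : ∀ j ≤ i, p j = q j) :
    A.profileOf p i = A.profileOf q i := by
  unfold NBW.profileOf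
  apply List.map_congr_left
  intro j hj
  rw [hpq j (Nat.lt_succ_iff.mp (List.mem_range.mp hj))]

lemma profileOf_succ (p : ℕ → Q) (i : ℕ) :
    A.profileOf p (i + 1) = A.profileOf p i ++ [A.acc (p (i + 1))] := by
  unfold NBW.profileOf
  rw [List.range_succ, List.map_append]
  rfl

lemma h_length (h : Q × ℕ → List Bool) (hprof : A.IsProfileFun w h)
    (u : Q × ℕ) (hd : A.InDag w u) : (h u).length = u.2 + 1 := by
  obtain ⟨p, _, hp⟩ := (hprof u hd).1
  rw [← hp, profileOf_length]

/-- Key: along a `G'`-edge, the profile of the target is the profile of the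
source extended by the target's acceptance label. -/
lemma key_lemma (h : Q × ℕ → List Bool) (hprof : A.IsProfileFun w h)
    (u u' : Q × ℕ) (hu : A.Edge' w h u u') :
    h u' = h u ++ [A.acc u'.1] := by
  obtain ⟨⟨hdu, hlev, htr⟩, hmax⟩ := hu
  -- u' is in the DAG
  obtain ⟨p, hprun, hpmax⟩ := (hprof u hdu).1
  obtain ⟨hp0', hptr', hplast⟩ := hprun
  -- build extension p' of the maximal run to u through u'
  set p' : ℕ → Q := fun j => if j ≤ u.2 then p j else u'.1 with hp'def
  have hp'eq : ∀ j ≤ u.2, p' j = p j := fun j hj => if_pos hj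
  have hp'last : p' (u.2 + 1) = u'.1 := if_neg (by omega)
  have hrun' : A.FinRunTo w p' u' := by
    refine ⟨by rw [hp'eq 0 (Nat.zero_le _)]; exact hp0', ?_, ?_⟩
    · intro j hj
      rw [hlev] at hj
      rcases Nat.lt_succ_iff_lt_or_eq.mp hj with hj' | rfl
      · rw [hp'eq (j + 1) hj', hp'eq j (le_of_lt hj')]
        exact hptr' j hj'
      · rw [hp'last, hp'eq u.2 (le_refl _), hplast]
        exact htr
    · rw [hlev]; exact hp'last
  have hdu' : A.InDag w u' := ⟨p', hrun'.1, hrun'.2.1, hrun'.2.2⟩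
  -- lower bound: h u ++ [acc u'] ≤ h u'
  have hlow : ProfLe (h u ++ [A.acc u'.1]) (h u') := by
    have := (hprof u' hdu').2 p' hrun'
    rwa [hlev, profileOf_succ, hp'last,
      profileOf_congr (p := p') (q := p) A u.2 hp'eq, hpmax] at this
  -- upper bound: h u' ≤ h u ++ [acc u']
  obtain ⟨q, ⟨hq0, hqtr, hqend⟩, hqmax⟩ := (hprof u' hdu').1
  have hq2 : A.profileOf q u'.2 = h u' := hqmax
  -- q restricted is a run to the predecessor (q u.2, u.2)
  set u'' : Q × ℕ := (q u.2, u.2) with hu''def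
  have hrunq : A.FinRunTo w q u'' :=
    ⟨hq0, fun j hj => hqtr j (by rw [hlev]; exact Nat.lt_succ_of_lt hj), rfl⟩
  have hdu'' : A.InDag w u'' := ⟨q, hrunq.1, hrunq.2.1, hrunq.2.2⟩
  have hedge : A.Edge w u'' u' := by
    refine ⟨hdu'', by rw [hlev], ?_⟩
    have := hqtr u.2 (by rw [hlev]; omega)
    rw [hlev] at hqend
    rwa [hqend] at this
  have hle1 : ProfLe (A.profileOf q u.2) (h u'') := (hprof u'' hdu'').2 q hrunq
  have hle2 : ProfLe (h u'') (h u) := not_profLt_iff.mp (hmax u'' hedge)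
  have hle3 : ProfLe (A.profileOf q u.2) (h u) := by
    rcases hle1 with h1 | h1
    · rw [h1]; exact hle2
    · rcases hle2 with h2 | h2
      · rw [← h2]; exact Or.inr h1
      · exact Or.inr (profLt_trans h1 h2)
  have hqsplit : h u' = A.profileOf q u.2 ++ [A.acc u'.1] := by
    rw [← hq2, hlev, profileOf_succ]
    rw [hlev] at hqend
    rw [hqend]
  have hhigh : ProfLe (h u') (h u ++ [A.acc u'.1]) := by
    rcases hle3 with h1 | h1
    · rw [hqsplit, h1]; exact Or.inl rfl
    · refine Or.inr ?_
      rw [hqsplit]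
      refine lex_append _ _ _ _ ?_ h1
      rw [profileOf_length, h_length A w h hprof u hdu]
  exact profLe_antisymm hhigh hlow

end Aux

/-- the profile preorder is preserved by `G'`-edges. -/
theorem stmt4 {Q σ : Type} (A : NBW Q σ) (w : ℕ → σ) (h : Q × ℕ → List Bool)
    (hprof : A.IsProfileFun w h) (u v u' v' : Q × ℕ)
    (hu : A.Edge' w h u u') (hv : A.Edge' w h v v') (hlev : u.2 = v.2) :
    (ProfLt (h u) (h v) → ProfLt (h u') (h v')) ∧
    (h u = h v → A.acc u'.1 = A.acc v'.1 → h u' = h v') ∧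
    (h u = h v → A.acc v'.1 = true → A.acc u'.1 = false → ProfLt (h u') (h v')) := by
  have hdv : A.InDag w v := hv.1.1
  have hdu : A.InDag w u := hu.1.1
  have ku := key_lemma A w h hprof u u' hu
  have kv := key_lemma A w h hprof v v' hv
  refine ⟨?_, ?_, ?_⟩
  · intro hlt
    rw [ku, kv]
    refine lex_append _ _ _ _ ?_ hlt
    rw [h_length A w h hprof u hdu, h_length A w h hprof v hdv, hlev]
  · intro heq hacc
    rw [ku, kv, heq, hacc]
  · intro heq haccv haccu
    rw [ku, kv, heq, haccv, haccu]
    exact lex_snoc _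
end

section
/- Among the accepting paths of a run DAG G (if any exist), there is one whose profile is lexicographically maximal: if the set P of accepting paths of G is nonempty, then there exists π ∈ P such that for all π' ∈ P, h_{π'} ≤ h_π in the lexicographic order on infinite 0-1 sequences. -/
section Stmt6Aux

variable {Q σ : Type} (A : NBW Q σ) (w : ℕ → σ)

open Classical in
/-- `true` iff some accepting path agrees with `l` and is `true` at position `l.length`. -/
noncomputable def stepB (l : List Bool) : Bool :=
  if (∃ π : ℕ → Q × ℕ, A.AcceptingPath (A.Edge w) π ∧
      (∀ m, m < l.length → A.acc (π m).1 = l.getD m false) ∧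
      A.acc (π l.length).1 = true) then true else false

noncomputable def prefB : ℕ → List Bool
  | 0 => []
  | n + 1 => prefB n ++ [stepB A w (prefB n)]

/-- The greedy lexicographically maximal profile. -/
noncomputable def bseq (n : ℕ) : Bool := stepB A w (prefB A w n)

lemma prefB_length (n : ℕ) : (prefB A w n).length = n := by
  induction n with
  | zero => rfl
  | succ n ih => simp [prefB, ih]

lemma prefB_getD {m n : ℕ} (h : m < n) : (prefB A w n).getD m false = bseq A w m := by
  induction n with
  | zero => omega
  | succ n ih =>
    rcases Nat.lt_succ_iff_lt_or_eq.mp h with h' | rfl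
    · rw [show prefB A w (n+1) = prefB A w n ++ [stepB A w (prefB A w n)] from rfl,
        List.getD_append _ _ _ _ (by rw [prefB_length]; exact h'), ih h']
    · rw [show prefB A w (m+1) = prefB A w m ++ [stepB A w (prefB A w m)] from rfl,
        List.getD_append_right _ _ _ _ (by rw [prefB_length])]
      simp [prefB_length, bseq]

lemma stepB_true_iff (l : List Bool) : stepB A w l = true ↔
    (∃ π : ℕ → Q × ℕ, A.AcceptingPath (A.Edge w) π ∧
      (∀ m, m < l.length → A.acc (π m).1 = l.getD m false) ∧
      A.acc (π l.length).1 = true) := by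
  classical
  unfold stepB
  split
  · next h => exact iff_of_true rfl h
  · next h => exact iff_of_false (by simp) h

lemma bseq_true_iff (n : ℕ) : bseq A w n = true ↔
    ∃ π : ℕ → Q × ℕ, A.AcceptingPath (A.Edge w) π ∧
      (∀ m, m < n → A.acc (π m).1 = bseq A w m) ∧ A.acc (π n).1 = true := by
  rw [bseq, stepB_true_iff]
  constructor
  · rintro ⟨π, hπ, hag, ht⟩
    exact ⟨π, hπ, fun m hm => by
      rw [hag m (by rw [prefB_length]; exact hm), prefB_getD A w hm],
      by rwa [prefB_length] at ht⟩
  · rintro ⟨π, hπ, hag, ht⟩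
    exact ⟨π, hπ, fun m hm => by
      rw [prefB_length] at hm
      rw [hag m hm, prefB_getD A w hm], by rwa [prefB_length]⟩

/-- Every prefix of `bseq` is realized by an accepting path. -/
lemma realizable (hne : ∃ π : ℕ → Q × ℕ, A.AcceptingPath (A.Edge w) π) (n : ℕ) :
    ∃ π : ℕ → Q × ℕ, A.AcceptingPath (A.Edge w) π ∧
      ∀ m, m < n → A.acc (π m).1 = bseq A w m := by
  induction n with
  | zero => obtain ⟨π, hπ⟩ := hne; exact ⟨π, hπ, by omega⟩
  | succ n ih =>
    by_cases hb : bseq A w n = true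
    · obtain ⟨π, hπ, hag, ht⟩ := (bseq_true_iff A w n).mp hb
      refine ⟨π, hπ, fun m hm => ?_⟩
      rcases Nat.lt_succ_iff_lt_or_eq.mp hm with h' | rfl
      · exact hag m h'
      · rw [ht, hb]
    · obtain ⟨π, hπ, hag⟩ := ih
      refine ⟨π, hπ, fun m hm => ?_⟩
      rcases Nat.lt_succ_iff_lt_or_eq.mp hm with h' | rfl
      · exact hag m h'
      · rw [Bool.eq_false_iff.mpr hb, Bool.eq_false_iff]
        intro ht
        exact hb ((bseq_true_iff A w m).mpr ⟨π, hπ, hag, ht⟩)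

/-- Maximality of `bseq`. -/
lemma bseq_max {π' : ℕ → Q × ℕ} (hπ' : A.AcceptingPath (A.Edge w) π') {n : ℕ}
    (hag : ∀ m, m < n → A.acc (π' m).1 = bseq A w m) (ht : A.acc (π' n).1 = true) :
    bseq A w n = true :=
  (bseq_true_iff A w n).mpr ⟨π', hπ', hag, ht⟩

/-- `bseq` is `true` infinitely often. -/
lemma bseq_inf_true (hne : ∃ π : ℕ → Q × ℕ, A.AcceptingPath (A.Edge w) π) (N : ℕ) :
    ∃ n, N ≤ n ∧ bseq A w n = true := by
  by_contra h
  push_neg at h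
  obtain ⟨π, hπ, hag⟩ := realizable A w hne N
  have key : ∀ n, ∀ m, m < n → A.acc (π m).1 = bseq A w m := by
    intro n
    induction n with
    | zero => omega
    | succ n ih =>
      intro m hm
      rcases Nat.lt_succ_iff_lt_or_eq.mp hm with h' | rfl
      · exact ih m h'
      · by_cases hmN : m < N
        · exact hag m hmN
        · have hb : bseq A w m = false :=
            Bool.eq_false_iff.mpr (h m (by omega))
          rw [hb, Bool.eq_false_iff]
          intro ht
          exact (h m (by omega)) (bseq_max A w hπ ih ht)
  obtain ⟨i, hiN, hit⟩ := hπ.2 N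
  have := key (i+1) i (by omega)
  rw [hit] at this
  exact h i hiN this.symm

lemma path_level {π : ℕ → Q × ℕ} (hπ : A.IsPath (A.Edge w) π) (i : ℕ) : (π i).2 = i := by
  induction i with
  | zero => exact hπ.2.1
  | succ i ih => rw [(hπ.2.2 i).2.1, ih]

/-- A node through which accepting paths agreeing with arbitrarily long prefixes
of `bseq` pass. -/
def GoodAt (v : Q × ℕ) : Prop :=
  ∀ n, ∃ π : ℕ → Q × ℕ, A.AcceptingPath (A.Edge w) π ∧
    (∀ m, m < n → A.acc (π m).1 = bseq A w m) ∧ π v.2 = v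

lemma infinite_fiber_good {f : ℕ → Q × ℕ}
    (hf : ∀ n, ∃ π : ℕ → Q × ℕ, A.AcceptingPath (A.Edge w) π ∧
      (∀ m, m < n → A.acc (π m).1 = bseq A w m) ∧ π (f n).2 = f n ∧ (f n).2 = (f 0).2)
    [Finite Q] : ∃ v, GoodAt A w v ∧ v.2 = (f 0).2 ∧ ∃ n, f n = v := by
  obtain ⟨q, hq⟩ := Finite.exists_infinite_fiber (fun n => (f n).1)
  have hqinf : ((fun n => (f n).1) ⁻¹' {q}).Infinite := Set.infinite_coe_iff.mp hq
  have hfv : ∀ n, n ∈ (fun n => (f n).1) ⁻¹' {q} → f n = (q, (f 0).2) := by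
    intro n hn
    have h2 : (f n).2 = (f 0).2 := (hf n).choose_spec.2.2.2
    exact Prod.ext hn h2
  obtain ⟨n0, hn0⟩ := hqinf.nonempty
  refine ⟨(q, (f 0).2), fun n => ?_, rfl, n0, hfv n0 hn0⟩
  obtain ⟨n', hn', hn'mem⟩ : ∃ n', n ≤ n' ∧ f n' = (q, (f 0).2) := by
    by_contra hc
    push_neg at hc
    refine hqinf ((Set.finite_Iio n).subset (fun k hk => ?_))
    by_contra hk'
    simp only [Set.mem_Iio, not_lt] at hk'
    exact hc k hk' (hfv k hk)
  obtain ⟨π, hπ, hag, hfix, _⟩ := hf n'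
  exact ⟨π, hπ, fun m hm => hag m (by omega), by rwa [hn'mem] at hfix⟩

variable [Finite Q]

lemma good_zero (hne : ∃ π : ℕ → Q × ℕ, A.AcceptingPath (A.Edge w) π) :
    ∃ v, GoodAt A w v ∧ v.2 = 0 := by
  have hf : ∀ n, ∃ π : ℕ → Q × ℕ, A.AcceptingPath (A.Edge w) π ∧
      (∀ m, m < n → A.acc (π m).1 = bseq A w m) ∧
      π ((realizable A w hne n).choose 0).2 = (realizable A w hne n).choose 0 ∧
      ((realizable A w hne n).choose 0).2 = ((realizable A w hne 0).choose 0).2 := by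
    intro n
    obtain ⟨hπ, hag⟩ := (realizable A w hne n).choose_spec
    refine ⟨_, hπ, hag, by rw [path_level A w hπ.1 0], ?_⟩
    rw [path_level A w hπ.1 0, path_level A w (realizable A w hne 0).choose_spec.1.1 0]
  obtain ⟨v, hgood, hlev, _⟩ := infinite_fiber_good A w (f := fun n => (realizable A w hne n).choose 0) hf
  refine ⟨v, hgood, ?_⟩
  rw [hlev, path_level A w (realizable A w hne 0).choose_spec.1.1 0]

lemma good_succ {v : Q × ℕ} (hv : GoodAt A w v) :
    ∃ v', A.Edge w v v' ∧ GoodAt A w v' := by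
  have hf : ∀ n, ∃ π : ℕ → Q × ℕ, A.AcceptingPath (A.Edge w) π ∧
      (∀ m, m < n → A.acc (π m).1 = bseq A w m) ∧
      π ((hv n).choose (v.2+1)).2 = (hv n).choose (v.2+1) ∧
      ((hv n).choose (v.2+1)).2 = ((hv 0).choose (v.2+1)).2 := by
    intro n
    obtain ⟨hπ, hag, _⟩ := (hv n).choose_spec
    refine ⟨_, hπ, hag, by rw [path_level A w hπ.1], ?_⟩
    rw [path_level A w hπ.1, path_level A w (hv 0).choose_spec.1.1]
  obtain ⟨v', hgood, _, n0, hn0⟩ := infinite_fiber_good A w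
    (f := fun n => (hv n).choose (v.2+1)) hf
  refine ⟨v', ?_, hgood⟩
  obtain ⟨hπ, hag, hfix⟩ := (hv n0).choose_spec
  have hE := hπ.1.2.2 v.2
  rw [hfix, show (hv n0).choose (v.2+1) = v' from hn0] at hE
  exact hE

noncomputable def chain (hne : ∃ π : ℕ → Q × ℕ, A.AcceptingPath (A.Edge w) π) :
    ℕ → {v : Q × ℕ // GoodAt A w v} :=
  Nat.rec ⟨(good_zero A w hne).choose, (good_zero A w hne).choose_spec.1⟩
    (fun _ p => ⟨(good_succ A w p.2).choose, (good_succ A w p.2).choose_spec.2⟩)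

lemma chain_edge (hne : ∃ π : ℕ → Q × ℕ, A.AcceptingPath (A.Edge w) π) (n : ℕ) :
    A.Edge w (chain A w hne n).1 (chain A w hne (n+1)).1 :=
  (good_succ A w (chain A w hne n).2).choose_spec.1

lemma chain_level (hne : ∃ π : ℕ → Q × ℕ, A.AcceptingPath (A.Edge w) π) (n : ℕ) :
    ((chain A w hne n).1).2 = n := by
  induction n with
  | zero => exact (good_zero A w hne).choose_spec.2
  | succ n ih => rw [(chain_edge A w hne n).2.1, ih]

lemma chain_profile (hne : ∃ π : ℕ → Q × ℕ, A.AcceptingPath (A.Edge w) π) (n : ℕ) :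
    A.acc ((chain A w hne n).1).1 = bseq A w n := by
  obtain ⟨π, hπ, hag, hfix⟩ := (chain A w hne n).2 (n+1)
  rw [chain_level A w hne n] at hfix
  rw [← hfix]
  exact hag n (by omega)

end Stmt6Aux

/-- among the accepting paths there is one with lexicographically
maximal (infinite) profile. -/
theorem stmt6 {Q σ : Type} [Finite Q] (A : NBW Q σ) (w : ℕ → σ)
    (hne : ∃ π : ℕ → Q × ℕ, A.AcceptingPath (A.Edge w) π) :
    ∃ π : ℕ → Q × ℕ, A.AcceptingPath (A.Edge w) π ∧
      ∀ π' : ℕ → Q × ℕ, A.AcceptingPath (A.Edge w) π' →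
        ((fun i => A.acc (π' i).1) = (fun i => A.acc (π i).1) ∨
         ∃ n, (∀ m, m < n → A.acc (π' m).1 = A.acc (π m).1) ∧
           A.acc (π' n).1 < A.acc (π n).1) := by
  classical
  set π : ℕ → Q × ℕ := fun n => (chain A w hne n).1 with hπdef
  have hlev : ∀ n, (π n).2 = n := chain_level A w hne
  have hprof : ∀ n, A.acc (π n).1 = bseq A w n := chain_profile A w hne
  obtain ⟨π0, hπ0, _, hfix0⟩ := (chain A w hne 0).2 0
  have h00 : π0 0 = π 0 := by
    have := hfix0
    rw [show ((chain A w hne 0).1).2 = 0 from hlev 0] at this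
    exact this
  have hpath : A.IsPath (A.Edge w) π :=
    ⟨by rw [← h00]; exact hπ0.1.1, hlev 0, chain_edge A w hne⟩
  have hacc : A.AcceptingPath (A.Edge w) π := by
    refine ⟨hpath, fun N => ?_⟩
    obtain ⟨n, hn, hb⟩ := bseq_inf_true A w hne N
    exact ⟨n, hn, by rw [hprof n, hb]⟩
  refine ⟨π, hacc, fun π' hπ' => ?_⟩
  by_cases heq : ∀ i, A.acc (π' i).1 = A.acc (π i).1
  · left; funext i; exact heq i
  · right
    push_neg at heq
    set n := Nat.find heq with hndef
    have hmin : ∀ m, m < n → A.acc (π' m).1 = A.acc (π m).1 := by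
      intro m hm
      have := Nat.find_min heq hm
      simpa using this
    refine ⟨n, hmin, ?_⟩
    have hag : ∀ m, m < n → A.acc (π' m).1 = bseq A w m :=
      fun m hm => (hmin m hm).trans (hprof m)
    have hdiff : A.acc (π' n).1 ≠ A.acc (π n).1 := Nat.find_spec heq
    rw [Bool.lt_iff]
    have h1 : A.acc (π' n).1 = false := by
      by_contra h
      simp only [Bool.not_eq_false] at h
      have ht : A.acc (π' n).1 = true := h
      have : bseq A w n = true := bseq_max A w hπ' hag ht
      exact hdiff (by rw [ht, hprof n, this])
    refine ⟨h1, ?_⟩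
    by_contra h
    have : A.acc (π n).1 = false := Bool.eq_false_iff.mpr h
    exact hdiff (by rw [h1, this])
end
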